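/- Every involution σ in the Weyl group W(C_n) (realized as signed permutations) can be written as σ = ∏_{α ∈ D} r_α for some orthogonal subset D ⊂ Φ⁺(C_n), and there is exactly one such orthogonal subset D with the additional property that no two roots α, β ∈ D satisfy α − β ∈ Φ⁺. -/

import Mathlib

open Matrix

/-- The standard basis vector `ε_i` of `ℝⁿ`. -/
def eps {n : ℕ} (i : Fin n) : Fin n → ℝ := Pi.single i 1

/-- The positive roots of `C_n`. -/
def PosRoots (n : ℕ) : Set (Fin n → ℝ) :=
  {v | (∃ i j : Fin n, i < j ∧ (v = eps i - eps j ∨ v = eps i + eps j)) ∨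
       (∃ i : Fin n, v = (2 : ℝ) • eps i)}

/-- The reflection `r_a(v) = v − 2(v,a)/(a,a) · a` as a linear endomorphism of `ℝⁿ`. -/
noncomputable def reflEnd {n : ℕ} (a : Fin n → ℝ) : Module.End ℝ (Fin n → ℝ) :=
  LinearMap.id -
    (2 / (a ⬝ᵥ a)) • ((∑ i, a i • (LinearMap.proj i : (Fin n → ℝ) →ₗ[ℝ] ℝ)).smulRight a)

/-- The Weyl group of `C_n`, realized as the (sub)monoid of endomorphisms of `ℝⁿ` generated
by the reflections in the roots (each reflection is an involution, so this monoid closure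
is in fact a group of signed permutations of the coordinates). -/
noncomputable def WeylC (n : ℕ) : Submonoid (Module.End ℝ (Fin n → ℝ)) :=
  Submonoid.closure (reflEnd '' PosRoots n)

/-- `σ` is the product of the reflections in the members of the finite set `D`
(in any order; for the sets considered the reflections commute). -/
def isProdOfRefls {n : ℕ} (D : Finset (Fin n → ℝ)) (σ : Module.End ℝ (Fin n → ℝ)) : Prop :=
  ∀ l : List (Fin n → ℝ), l.Nodup → l.toFinset = D → (l.map reflEnd).prod = σ

lemma eps_apply {n : ℕ} (i k : Fin n) : eps i k = if k = i then 1 else 0 :=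
  Pi.single_apply i 1 k

lemma eps_self {n : ℕ} (i : Fin n) : eps i i = 1 := by simp [eps_apply]

lemma eps_apply_ne {n : ℕ} {i k : Fin n} (h : k ≠ i) : eps i k = 0 := by
  simp [eps_apply, h]

lemma eps_dot {n : ℕ} (i : Fin n) (v : Fin n → ℝ) : eps i ⬝ᵥ v = v i := by
  simp [dotProduct, eps_apply]

lemma dot_eps {n : ℕ} (v : Fin n → ℝ) (i : Fin n) : v ⬝ᵥ eps i = v i := by
  simp [dotProduct, eps_apply]

lemma eps_inj {n : ℕ} {i j : Fin n} (h : eps i = eps j) : i = j := by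
  by_contra hne
  have := congrFun h i
  rw [eps_self, eps_apply_ne hne] at this
  norm_num at this

lemma eps_ne_neg {n : ℕ} (i j : Fin n) : eps i ≠ -eps j := by
  intro h
  have := congrFun h i
  rw [eps_self] at this
  simp only [Pi.neg_apply, eps_apply] at this
  split at this <;> norm_num at this

lemma smul_eps_inj {n : ℕ} {s t : ℝ} {i j : Fin n} (hs : s ≠ 0)
    (h : s • eps i = t • eps j) : s = t ∧ i = j := by
  have hi := congrFun h i
  simp only [Pi.smul_apply, smul_eq_mul, eps_self, mul_one, eps_apply] at hi
  split at hi
  · rename_i hji; subst hji; exact ⟨by linarith [hi], rfl⟩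
  · simp at hi; exact absurd hi hs

lemma reflEnd_apply {n : ℕ} (a v : Fin n → ℝ) :
    reflEnd a v = v - (2 / (a ⬝ᵥ a) * (a ⬝ᵥ v)) • a := by
  simp only [reflEnd, LinearMap.sub_apply, LinearMap.id_apply, LinearMap.smul_apply,
    LinearMap.smulRight_apply, LinearMap.sum_apply, LinearMap.proj_apply, smul_eq_mul,
    dotProduct]
  rw [smul_smul]

/-- if `v` vanishes on the support of `a`, then the reflection fixes `v`. -/
lemma reflEnd_fix {n : ℕ} {a v : Fin n → ℝ} (h : ∀ m, a m ≠ 0 → v m = 0) :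
    reflEnd a v = v := by
  have hav : a ⬝ᵥ v = 0 := by
    apply Finset.sum_eq_zero
    intro m _
    by_cases hm : a m = 0
    · simp [hm]
    · simp [h m hm]
  rw [reflEnd_apply, hav]
  simp

lemma dot_sub_sub {n : ℕ} {i j : Fin n} (hij : i ≠ j) :
    (eps i - eps j) ⬝ᵥ (eps i - eps j) = 2 := by
  simp [sub_dotProduct, dotProduct_sub, eps_dot, eps_self, eps_apply_ne hij,
    eps_apply_ne (Ne.symm hij)]
  norm_num

lemma dot_add_add {n : ℕ} {i j : Fin n} (hij : i ≠ j) :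
    (eps i + eps j) ⬝ᵥ (eps i + eps j) = 2 := by
  simp [add_dotProduct, dotProduct_add, eps_dot, eps_self, eps_apply_ne hij,
    eps_apply_ne (Ne.symm hij)]
  norm_num

lemma refl_two {n : ℕ} (i k : Fin n) :
    reflEnd ((2:ℝ) • eps i) (eps k) = if k = i then -eps i else eps k := by
  rw [reflEnd_apply]
  have h1 : ((2:ℝ) • eps i) ⬝ᵥ ((2:ℝ) • eps i) = 4 := by
    rw [smul_dotProduct, dotProduct_smul, eps_dot]
    simp [eps_self]; norm_num
  have h2 : ((2:ℝ) • eps i) ⬝ᵥ eps k = if k = i then 2 else 0 := by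
    rw [smul_dotProduct, eps_dot, eps_apply]
    rcases eq_or_ne k i with rfl | h
    · simp
    · rw [if_neg (Ne.symm h), if_neg h]; simp
  rw [h1, h2]
  rcases eq_or_ne k i with rfl | hki
  · rw [if_pos rfl, if_pos rfl]
    norm_num
    funext m
    simp only [Pi.sub_apply, Pi.smul_apply, Pi.neg_apply, smul_eq_mul]
    ring
  · rw [if_neg hki, if_neg hki]
    norm_num

lemma refl_sub {n : ℕ} {i j : Fin n} (hij : i ≠ j) (k : Fin n) :
    reflEnd (eps i - eps j) (eps k) =
      if k = i then eps j else if k = j then eps i else eps k := by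
  rw [reflEnd_apply, dot_sub_sub hij]
  have h2 : (eps i - eps j) ⬝ᵥ eps k = (if i = k then 1 else 0) - (if j = k then 1 else 0) := by
    rw [sub_dotProduct, eps_dot, eps_dot, eps_apply, eps_apply]
  rw [h2]
  funext m
  by_cases hki : k = i <;> by_cases hkj : k = j <;> by_cases hmi : m = i <;>
    by_cases hmj : m = j <;> by_cases hmk : m = k <;>
    simp_all [eps_apply, Pi.sub_apply, Pi.smul_apply] <;>
    first
      | (exact fun hh => hij hh.symm)
      | (split_ifs <;> simp_all [eps_apply] <;> norm_num)

lemma refl_add {n : ℕ} {i j : Fin n} (hij : i ≠ j) (k : Fin n) :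
    reflEnd (eps i + eps j) (eps k) =
      if k = i then -eps j else if k = j then -eps i else eps k := by
  rw [reflEnd_apply, dot_add_add hij]
  have h2 : (eps i + eps j) ⬝ᵥ eps k = (if i = k then 1 else 0) + (if j = k then 1 else 0) := by
    rw [add_dotProduct, eps_dot, eps_dot, eps_apply, eps_apply]
  rw [h2]
  funext m
  by_cases hki : k = i <;> by_cases hkj : k = j <;> by_cases hmi : m = i <;>
    by_cases hmj : m = j <;> by_cases hmk : m = k <;>
    simp_all [eps_apply, Pi.sub_apply, Pi.add_apply, Pi.smul_apply, Pi.neg_apply] <;>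
    first
      | (exact fun hh => hij hh.symm)
      | (split_ifs <;> simp_all [eps_apply] <;> norm_num)

lemma prod_fix {n : ℕ} (l : List (Fin n → ℝ)) (v : Fin n → ℝ)
    (h : ∀ a ∈ l, ∀ m, a m ≠ 0 → v m = 0) :
    (l.map reflEnd).prod v = v := by
  induction l with
  | nil => simp
  | cons b t ih =>
    simp only [List.map_cons, List.prod_cons, Module.End.mul_apply]
    rw [ih (fun a ha => h a (List.mem_cons_of_mem _ ha))]
    exact reflEnd_fix (h b List.mem_cons_self)

lemma prod_eq_refl {n : ℕ} (l : List (Fin n → ℝ))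
    (hp : l.Pairwise (fun a b => ∀ m, a m = 0 ∨ b m = 0))
    (a : Fin n → ℝ) (ha : a ∈ l) (k : Fin n) (hak : a k ≠ 0) :
    (l.map reflEnd).prod (eps k) = reflEnd a (eps k) := by
  induction l with
  | nil => simp at ha
  | cons b t ih =>
    rw [List.pairwise_cons] at hp
    simp only [List.map_cons, List.prod_cons, Module.End.mul_apply]
    rcases List.mem_cons.1 ha with rfl | hat
    · rw [prod_fix]
      intro c hc m hcm
      have ham : a m = 0 := (hp.1 c hc m).resolve_right hcm
      have : m ≠ k := fun hmk => hak (hmk ▸ ham)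
      exact eps_apply_ne this
    · rw [ih hp.2 hat]
      apply reflEnd_fix
      intro m hbm
      have ham : a m = 0 := ((hp.1 a hat m).resolve_left hbm)
      have hmk : m ≠ k := fun hmk => hak (hmk ▸ ham)
      rw [reflEnd_apply]
      simp [ham, eps_apply_ne hmk]

lemma dot_zero_of_disjoint {n : ℕ} {a b : Fin n → ℝ} (h : ∀ m, a m = 0 ∨ b m = 0) :
    a ⬝ᵥ b = 0 := by
  apply Finset.sum_eq_zero
  intro m _
  rcases h m with h' | h' <;> simp [h']

lemma reflEnd_comm {n : ℕ} {a b : Fin n → ℝ} (h : ∀ m, a m = 0 ∨ b m = 0) :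
    Commute (reflEnd a) (reflEnd b) := by
  have hab : a ⬝ᵥ b = 0 := dot_zero_of_disjoint h
  have hba : b ⬝ᵥ a = 0 := dot_zero_of_disjoint (fun m => (h m).symm)
  apply LinearMap.ext
  intro v
  simp only [Module.End.mul_apply, reflEnd_apply]
  rw [dotProduct_sub, dotProduct_smul, hab, dotProduct_sub, dotProduct_smul, hba]
  simp only [smul_zero, sub_zero, smul_eq_mul, mul_zero]
  rw [sub_sub, sub_sub, add_comm]

def Signed {n : ℕ} (σ : Module.End ℝ (Fin n → ℝ)) : Prop :=
  ∀ i, ∃ s : ℝ, ∃ j, (s = 1 ∨ s = -1) ∧ σ (eps i) = s • eps j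

lemma signed_of_mem {n : ℕ} {σ : Module.End ℝ (Fin n → ℝ)} (h : σ ∈ WeylC n) :
    Signed σ := by
  induction h using Submonoid.closure_induction with
  | mem x hx =>
    obtain ⟨a, ha, rfl⟩ := hx
    rcases ha with ⟨i, j, hij, rfl | rfl⟩ | ⟨i, rfl⟩
    · intro k
      rw [refl_sub hij.ne k]
      by_cases hki : k = i
      · exact ⟨1, j, Or.inl rfl, by rw [if_pos hki]; simp⟩
      · by_cases hkj : k = j
        · exact ⟨1, i, Or.inl rfl, by rw [if_neg hki, if_pos hkj]; simp⟩
        · exact ⟨1, k, Or.inl rfl, by rw [if_neg hki, if_neg hkj]; simp⟩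
    · intro k
      rw [refl_add hij.ne k]
      by_cases hki : k = i
      · exact ⟨-1, j, Or.inr rfl, by rw [if_pos hki]; simp⟩
      · by_cases hkj : k = j
        · exact ⟨-1, i, Or.inr rfl, by rw [if_neg hki, if_pos hkj]; simp⟩
        · exact ⟨1, k, Or.inl rfl, by rw [if_neg hki, if_neg hkj]; simp⟩
    · intro k
      rw [refl_two i k]
      by_cases hki : k = i
      · exact ⟨-1, i, Or.inr rfl, by rw [if_pos hki]; simp⟩
      · exact ⟨1, k, Or.inl rfl, by rw [if_neg hki]; simp⟩
  | one => exact fun i => ⟨1, i, Or.inl rfl, by simp⟩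
  | mul x y hx hy ihx ihy =>
    intro i
    obtain ⟨s, j, hs, hyj⟩ := ihy i
    obtain ⟨t, k, ht, hxk⟩ := ihx j
    refine ⟨s * t, k, ?_, ?_⟩
    · rcases hs with rfl | rfl <;> rcases ht with rfl | rfl <;> norm_num
    · rw [Module.End.mul_apply, hyj, _root_.map_smul, hxk, smul_smul]

lemma root_mem_cases {n : ℕ} {a : Fin n → ℝ} (h : a ∈ PosRoots n) :
    (∃ i j : Fin n, i < j ∧ a = eps i - eps j) ∨
    (∃ i j : Fin n, i < j ∧ a = eps i + eps j) ∨ (∃ i, a = (2:ℝ) • eps i) := by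
  rcases h with ⟨i, j, hij, rfl | rfl⟩ | ⟨i, rfl⟩
  · exact Or.inl ⟨i, j, hij, rfl⟩
  · exact Or.inr (Or.inl ⟨i, j, hij, rfl⟩)
  · exact Or.inr (Or.inr ⟨i, rfl⟩)

lemma sub_entries {n : ℕ} (i j m : Fin n) :
    (eps i - eps j) m = (if m = i then 1 else 0) - (if m = j then 1 else 0) := by
  simp [Pi.sub_apply, eps_apply]

lemma add_entries {n : ℕ} (i j m : Fin n) :
    (eps i + eps j) m = (if m = i then 1 else 0) + (if m = j then 1 else 0) := by
  simp [Pi.add_apply, eps_apply]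

lemma two_entries {n : ℕ} (i m : Fin n) :
    ((2:ℝ) • eps i) m = if m = i then 2 else 0 := by
  simp [Pi.smul_apply, eps_apply]

lemma root_supp_sub {n : ℕ} {i j : Fin n} (hij : i ≠ j) {m : Fin n}
    (h : (eps i - eps j) m ≠ 0) : m = i ∨ m = j := by
  by_contra hc
  push_neg at hc
  rw [sub_entries, if_neg hc.1, if_neg hc.2] at h
  simp at h

lemma root_supp_add {n : ℕ} {i j : Fin n} {m : Fin n}
    (h : (eps i + eps j) m ≠ 0) : m = i ∨ m = j := by
  by_contra hc
  push_neg at hc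
  rw [add_entries, if_neg hc.1, if_neg hc.2] at h
  simp at h

lemma root_supp_two {n : ℕ} {i m : Fin n} (h : ((2:ℝ) • eps i) m ≠ 0) : m = i := by
  by_contra hc
  rw [two_entries, if_neg hc] at h
  simp at h

lemma root_entry {n : ℕ} {a : Fin n → ℝ} (h : a ∈ PosRoots n) (m : Fin n) :
    a m = 0 ∨ a m = 1 ∨ a m = -1 ∨ a m = 2 := by
  rcases root_mem_cases h with ⟨i, j, hij, rfl⟩ | ⟨i, j, hij, rfl⟩ | ⟨i, rfl⟩
  · rw [sub_entries]
    split_ifs <;> norm_num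
  · rw [add_entries]
    split_ifs with h1 h2 h2
    · exact absurd (h1.symm.trans h2) hij.ne
    all_goals norm_num
  · rw [two_entries]
    split_ifs <;> norm_num

lemma root_three {n : ℕ} {c : Fin n → ℝ} (h : c ∈ PosRoots n) {x y z : Fin n}
    (hx : c x ≠ 0) (hy : c y ≠ 0) (hz : c z ≠ 0) : x = y ∨ x = z ∨ y = z := by
  rcases root_mem_cases h with ⟨i, j, hij, rfl⟩ | ⟨i, j, hij, rfl⟩ | ⟨i, rfl⟩
  · rcases root_supp_sub hij.ne hx with rfl|rfl <;> rcases root_supp_sub hij.ne hy with rfl|rfl <;>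
      rcases root_supp_sub hij.ne hz with rfl|rfl <;> tauto
  · rcases root_supp_add hx with rfl|rfl <;> rcases root_supp_add hy with rfl|rfl <;>
      rcases root_supp_add hz with rfl|rfl <;> tauto
  · rw [root_supp_two hx, root_supp_two hy]
    tauto
lemma dot_sub_v {n : ℕ} (i j : Fin n) (v : Fin n → ℝ) : (eps i - eps j) ⬝ᵥ v = v i - v j := by
  rw [sub_dotProduct, eps_dot, eps_dot]

lemma dot_add_v {n : ℕ} (i j : Fin n) (v : Fin n → ℝ) : (eps i + eps j) ⬝ᵥ v = v i + v j := by
  rw [add_dotProduct, eps_dot, eps_dot]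

lemma dot_two_v {n : ℕ} (i : Fin n) (v : Fin n → ℝ) : ((2:ℝ) • eps i) ⬝ᵥ v = 2 * v i := by
  rw [smul_dotProduct, eps_dot]; simp

lemma disjoint_of_orth {n : ℕ} {a b : Fin n → ℝ} (ha : a ∈ PosRoots n) (hb : b ∈ PosRoots n)
    (horth : a ⬝ᵥ b = 0) (hd1 : a - b ∉ PosRoots n) (hd2 : b - a ∉ PosRoots n) :
    ∀ m, a m = 0 ∨ b m = 0 := by
  intro m
  by_contra hm
  push_neg at hm
  obtain ⟨ham, hbm⟩ := hm
  rcases root_mem_cases ha with ⟨i, j, hij, rfl⟩ | ⟨i, j, hij, rfl⟩ | ⟨i, rfl⟩ <;>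
    rcases root_mem_cases hb with ⟨p, q, hpq, rfl⟩ | ⟨p, q, hpq, rfl⟩ | ⟨p, rfl⟩
  · -- sub, sub
    rw [dot_sub_v, sub_entries, sub_entries] at horth
    rcases root_supp_sub hij.ne ham with rfl | rfl <;>
      rcases root_supp_sub hpq.ne hbm with h | h <;>
      split_ifs at horth <;> first | omega | norm_num at horth
  · -- sub, add : consistent branch gives b - a = 2 eps (second index of a)
    rw [dot_sub_v, add_entries, add_entries] at horth
    rcases root_supp_sub hij.ne ham with rfl | rfl
    · rcases root_supp_add hbm with h | h <;>
        split_ifs at horth <;>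
        first
          | omega
          | (apply hd2; right; refine ⟨j, ?_⟩
             have h1 : p = m := by omega
             have h2 : q = j := by omega
             subst h1; subst h2; module)
          | norm_num at horth
    · rcases root_supp_add hbm with h | h <;>
        split_ifs at horth <;>
        first
          | omega
          | (apply hd2; right; refine ⟨m, ?_⟩
             have h1 : p = i := by omega
             have h2 : q = m := by omega
             subst h1; subst h2; module)
          | norm_num at horth
  · -- sub, two
    rw [dot_sub_v, two_entries, two_entries] at horth
    rcases root_supp_sub hij.ne ham with rfl | rfl <;>
      [(have h := root_supp_two hbm); (have h := root_supp_two hbm)] <;>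
      split_ifs at horth <;> first | omega | norm_num at horth
  · -- add, sub : consistent gives a - b = 2 eps (second index of a)
    rw [dot_add_v, sub_entries, sub_entries] at horth
    rcases root_supp_add ham with rfl | rfl
    · rcases root_supp_sub hpq.ne hbm with h | h <;>
        split_ifs at horth <;>
        first
          | omega
          | (apply hd1; right; refine ⟨j, ?_⟩
             have h1 : p = m := by omega
             have h2 : q = j := by omega
             subst h1; subst h2; module)
          | norm_num at horth
    · rcases root_supp_sub hpq.ne hbm with h | h <;>
        split_ifs at horth <;>
        first
          | omega
          | (apply hd1; right; refine ⟨m, ?_⟩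
             have h1 : p = i := by omega
             have h2 : q = m := by omega
             subst h1; subst h2; module)
          | norm_num at horth
  · -- add, add
    rw [dot_add_v, add_entries, add_entries] at horth
    rcases root_supp_add ham with rfl | rfl <;>
      rcases root_supp_add hbm with h | h <;>
      split_ifs at horth <;> first | omega | norm_num at horth
  · -- add, two
    rw [dot_add_v, two_entries, two_entries] at horth
    rcases root_supp_add ham with rfl | rfl <;>
      (have h := root_supp_two hbm) <;>
      split_ifs at horth <;> first | omega | norm_num at horth
  · -- two, sub
    rw [dot_two_v, sub_entries] at horth
    have h := root_supp_two ham
    rcases root_supp_sub hpq.ne hbm with h2 | h2 <;>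
      split_ifs at horth <;> first | omega | norm_num at horth
  · -- two, add
    rw [dot_two_v, add_entries] at horth
    have h := root_supp_two ham
    rcases root_supp_add hbm with h2 | h2 <;>
      split_ifs at horth <;> first | omega | norm_num at horth
  · -- two, two
    rw [dot_two_v, two_entries] at horth
    have h := root_supp_two ham
    have h2 := root_supp_two hbm
    split_ifs at horth <;> first | omega | norm_num at horth

lemma root_nonzero_witness {n : ℕ} {a : Fin n → ℝ} (h : a ∈ PosRoots n) : ∃ p, a p ≠ 0 := by
  rcases root_mem_cases h with ⟨i, j, hij, rfl⟩ | ⟨i, j, hij, rfl⟩ | ⟨i, rfl⟩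
  · exact ⟨i, by rw [sub_entries, if_pos rfl, if_neg hij.ne]; norm_num⟩
  · exact ⟨i, by rw [add_entries, if_pos rfl, if_neg hij.ne]; norm_num⟩
  · exact ⟨i, by rw [two_entries, if_pos rfl]; norm_num⟩

lemma root_two_supp {n : ℕ} {a : Fin n → ℝ} (h : a ∈ PosRoots n) :
    (∃ i j, i ≠ j ∧ a i ≠ 0 ∧ a j ≠ 0) ∨ ∃ i, a = (2:ℝ) • eps i := by
  rcases root_mem_cases h with ⟨i, j, hij, rfl⟩ | ⟨i, j, hij, rfl⟩ | ⟨i, rfl⟩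
  · refine Or.inl ⟨i, j, hij.ne, ?_, ?_⟩
    · rw [sub_entries, if_pos rfl, if_neg hij.ne]; norm_num
    · rw [sub_entries, if_neg hij.ne', if_pos rfl]; norm_num
  · refine Or.inl ⟨i, j, hij.ne, ?_, ?_⟩
    · rw [add_entries, if_pos rfl, if_neg hij.ne]; norm_num
    · rw [add_entries, if_neg hij.ne', if_pos rfl]; norm_num
  · exact Or.inr ⟨i, rfl⟩

lemma sub_not_root {n : ℕ} {a b : Fin n → ℝ} (ha : a ∈ PosRoots n) (hb : b ∈ PosRoots n)
    (hd : ∀ m, a m = 0 ∨ b m = 0) : a - b ∉ PosRoots n := by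
  intro hc
  obtain ⟨q, hq⟩ := root_nonzero_witness hb
  have haq : a q = 0 := (hd q).resolve_right hq
  rcases root_two_supp ha with ⟨i, j, hijne, hai, haj⟩ | ⟨i, rfl⟩
  · have hbi : b i = 0 := (hd i).resolve_left hai
    have hbj : b j = 0 := (hd j).resolve_left haj
    have hci : (a - b) i ≠ 0 := by simp [Pi.sub_apply, hbi, hai]
    have hcj : (a - b) j ≠ 0 := by simp [Pi.sub_apply, hbj, haj]
    have hcq : (a - b) q ≠ 0 := by simp [Pi.sub_apply, haq, hq]
    have hiq : i ≠ q := fun h => hai (h ▸ haq)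
    have hjq : j ≠ q := fun h => haj (h ▸ haq)
    rcases root_three hc hci hcj hcq with h | h | h
    · exact hijne h
    · exact hiq h
    · exact hjq h
  · rcases root_two_supp hb with ⟨p', q', hne, hbp', hbq'⟩ | ⟨p', rfl⟩
    · have hai : ((2:ℝ) • eps i) i ≠ 0 := by rw [two_entries, if_pos rfl]; norm_num
      have hap' : ((2:ℝ) • eps i) p' = 0 := (hd p').resolve_right hbp'
      have haq' : ((2:ℝ) • eps i) q' = 0 := (hd q').resolve_right hbq'
      have hbi : b i = 0 := (hd i).resolve_left hai
      have hci : ((2:ℝ) • eps i - b) i ≠ 0 := by simp [Pi.sub_apply, hbi]; simpa using hai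
      have hcp : ((2:ℝ) • eps i - b) p' ≠ 0 := by simp [Pi.sub_apply, hap', hbp']
      have hcq : ((2:ℝ) • eps i - b) q' ≠ 0 := by simp [Pi.sub_apply, haq', hbq']
      have hip : i ≠ p' := fun h => hai (h ▸ hap')
      have hiq : i ≠ q' := fun h => hai (h ▸ haq')
      rcases root_three hc hci hcp hcq with h | h | h
      · exact hip h
      · exact hiq h
      · exact hne h
    · have hbp' : ((2:ℝ) • eps p') p' = 2 := by rw [two_entries, if_pos rfl]
      have hap' : ((2:ℝ) • eps i) p' = 0 := by
        rcases hd p' with h | h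
        · exact h
        · rw [hbp'] at h; norm_num at h
      have : ((2:ℝ) • eps i - (2:ℝ) • eps p') p' = -2 := by
        rw [Pi.sub_apply, hap', hbp']; norm_num
      rcases root_entry hc p' with h | h | h | h <;> rw [this] at h <;> norm_num at h

/-- The canonical membership criterion. -/
def critProp {n : ℕ} (σ : Module.End ℝ (Fin n → ℝ)) (a : Fin n → ℝ) : Prop :=
  (∃ i, a = (2:ℝ) • eps i ∧ σ (eps i) = -eps i) ∨
  (∃ i j, i < j ∧ a = eps i - eps j ∧ σ (eps i) = eps j) ∨
  (∃ i j, i < j ∧ a = eps i + eps j ∧ σ (eps i) = -eps j)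

lemma crit {n : ℕ} {D : Finset (Fin n → ℝ)} {σ : Module.End ℝ (Fin n → ℝ)}
    (hroots : ↑D ⊆ PosRoots n)
    (hdisj : ∀ a ∈ D, ∀ b ∈ D, a ≠ b → ∀ m, a m = 0 ∨ b m = 0)
    (hprod : (D.toList.map reflEnd).prod = σ) :
    ∀ a, a ∈ D ↔ critProp σ a := by
  have hlp : D.toList.Pairwise (fun a b => ∀ m, a m = 0 ∨ b m = 0) :=
    (Finset.nodup_toList D).pairwise_of_forall_ne
      (fun a ha b hb hne => hdisj a (Finset.mem_toList.1 ha) b (Finset.mem_toList.1 hb) hne)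
  have hval : ∀ b ∈ D, ∀ k, b k ≠ 0 → σ (eps k) = reflEnd b (eps k) := by
    intro b hb k hbk
    rw [← hprod]
    exact prod_eq_refl _ hlp b (Finset.mem_toList.2 hb) k hbk
  have hfix : ∀ k, (∀ b ∈ D, b k = 0) → σ (eps k) = eps k := by
    intro k hk
    rw [← hprod]
    apply prod_fix
    intro c hc m hcm
    have : c k = 0 := hk c (Finset.mem_toList.1 hc)
    exact eps_apply_ne (fun hmk => hcm (by rw [hmk] at *; exact this) )
  intro a
  constructor
  · intro haD
    rcases root_mem_cases (hroots haD) with ⟨i, j, hij, rfl⟩ | ⟨i, j, hij, rfl⟩ | ⟨i, rfl⟩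
    · refine Or.inr (Or.inl ⟨i, j, hij, rfl, ?_⟩)
      rw [hval _ haD i (by rw [sub_entries, if_pos rfl, if_neg hij.ne]; norm_num),
        refl_sub hij.ne, if_pos rfl]
    · refine Or.inr (Or.inr ⟨i, j, hij, rfl, ?_⟩)
      rw [hval _ haD i (by rw [add_entries, if_pos rfl, if_neg hij.ne]; norm_num),
        refl_add hij.ne, if_pos rfl]
    · refine Or.inl ⟨i, rfl, ?_⟩
      rw [hval _ haD i (by rw [two_entries, if_pos rfl]; norm_num), refl_two, if_pos rfl]
  · intro hcrit
    rcases hcrit with ⟨i, rfl, hσi⟩ | ⟨i, j, hij, rfl, hσi⟩ | ⟨i, j, hij, rfl, hσi⟩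
    · -- a = 2 eps i
      by_cases hex : ∃ b ∈ D, b i ≠ 0
      · obtain ⟨b, hbD, hbi⟩ := hex
        rcases root_mem_cases (hroots hbD) with ⟨p, q, hpq, rfl⟩ | ⟨p, q, hpq, rfl⟩ | ⟨p, rfl⟩
        · exfalso
          rcases root_supp_sub hpq.ne hbi with rfl | rfl
          · rw [hval _ hbD i hbi, refl_sub hpq.ne, if_pos rfl] at hσi
            exact eps_ne_neg q i hσi
          · rw [hval _ hbD i hbi, refl_sub hpq.ne, if_neg (Ne.symm hpq.ne), if_pos rfl] at hσi
            exact eps_ne_neg p i hσi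
        · exfalso
          rcases root_supp_add hbi with rfl | rfl
          · rw [hval _ hbD i hbi, refl_add hpq.ne, if_pos rfl] at hσi
            have := eps_inj (neg_injective hσi)
            omega
          · rw [hval _ hbD i hbi, refl_add hpq.ne, if_neg (Ne.symm hpq.ne), if_pos rfl] at hσi
            have := eps_inj (neg_injective hσi)
            omega
        · have := root_supp_two hbi
          subst this
          exact hbD
      · exfalso
        push_neg at hex
        rw [hfix i hex] at hσi
        exact eps_ne_neg i i hσi
    · -- a = eps i - eps j
      by_cases hex : ∃ b ∈ D, b i ≠ 0
      · obtain ⟨b, hbD, hbi⟩ := hex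
        rcases root_mem_cases (hroots hbD) with ⟨p, q, hpq, rfl⟩ | ⟨p, q, hpq, rfl⟩ | ⟨p, rfl⟩
        · rcases root_supp_sub hpq.ne hbi with rfl | rfl
          · rw [hval _ hbD i hbi, refl_sub hpq.ne, if_pos rfl] at hσi
            rw [eps_inj hσi] at hbD
            exact hbD
          · exfalso
            rw [hval _ hbD i hbi, refl_sub hpq.ne, if_neg (Ne.symm hpq.ne), if_pos rfl] at hσi
            have := eps_inj hσi
            omega
        · exfalso
          rcases root_supp_add hbi with rfl | rfl
          · rw [hval _ hbD i hbi, refl_add hpq.ne, if_pos rfl] at hσi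
            exact eps_ne_neg j q hσi.symm
          · rw [hval _ hbD i hbi, refl_add hpq.ne, if_neg (Ne.symm hpq.ne), if_pos rfl] at hσi
            exact eps_ne_neg j p hσi.symm
        · exfalso
          have := root_supp_two hbi
          subst this
          rw [hval _ hbD i hbi, refl_two, if_pos rfl] at hσi
          exact eps_ne_neg j i hσi.symm
      · exfalso
        push_neg at hex
        rw [hfix i hex] at hσi
        have := eps_inj hσi
        omega
    · -- a = eps i + eps j
      by_cases hex : ∃ b ∈ D, b i ≠ 0
      · obtain ⟨b, hbD, hbi⟩ := hex
        rcases root_mem_cases (hroots hbD) with ⟨p, q, hpq, rfl⟩ | ⟨p, q, hpq, rfl⟩ | ⟨p, rfl⟩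
        · exfalso
          rcases root_supp_sub hpq.ne hbi with rfl | rfl
          · rw [hval _ hbD i hbi, refl_sub hpq.ne, if_pos rfl] at hσi
            exact eps_ne_neg q j hσi
          · rw [hval _ hbD i hbi, refl_sub hpq.ne, if_neg (Ne.symm hpq.ne), if_pos rfl] at hσi
            exact eps_ne_neg p j hσi
        · rcases root_supp_add hbi with rfl | rfl
          · rw [hval _ hbD i hbi, refl_add hpq.ne, if_pos rfl] at hσi
            rw [eps_inj (neg_injective hσi)] at hbD
            exact hbD
          · exfalso
            rw [hval _ hbD i hbi, refl_add hpq.ne, if_neg (Ne.symm hpq.ne), if_pos rfl] at hσi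
            have := eps_inj (neg_injective hσi)
            omega
        · exfalso
          have := root_supp_two hbi
          subst this
          rw [hval _ hbD i hbi, refl_two, if_pos rfl] at hσi
          have := eps_inj (neg_injective hσi.symm)
          omega
      · exfalso
        push_neg at hex
        rw [hfix i hex] at hσi
        exact eps_ne_neg i j hσi

lemma zero_not_root {n : ℕ} : (0 : Fin n → ℝ) ∉ PosRoots n := fun h => by
  obtain ⟨p, hp⟩ := root_nonzero_witness h
  exact hp rfl

theorem stmt8 (n : ℕ) (σ : Module.End ℝ (Fin n → ℝ))
    (hσW : σ ∈ WeylC n) (hσ2 : σ * σ = 1) :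
    (∃ D : Finset (Fin n → ℝ), ↑D ⊆ PosRoots n ∧
      (∀ a ∈ D, ∀ b ∈ D, a ≠ b → a ⬝ᵥ b = 0) ∧ isProdOfRefls D σ) ∧
    (∃! D : Finset (Fin n → ℝ), ↑D ⊆ PosRoots n ∧
      (∀ a ∈ D, ∀ b ∈ D, a ≠ b → a ⬝ᵥ b = 0) ∧
      (∀ a ∈ D, ∀ b ∈ D, a - b ∉ PosRoots n) ∧ isProdOfRefls D σ) := by
  classical
  choose s π hs hσ using signed_of_mem hσW
  have hinv : ∀ i, π (π i) = i ∧ s (π i) = s i := by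
    intro i
    have h1 : σ (σ (eps i)) = eps i := by
      have := congrArg (fun f : Module.End ℝ (Fin n → ℝ) => f (eps i)) hσ2
      simpa [Module.End.mul_apply] using this
    rw [hσ i, _root_.map_smul, hσ (π i), smul_smul] at h1
    have hne : s i * s (π i) ≠ 0 := by
      rcases hs i with h | h <;> rcases hs (π i) with h' | h' <;> rw [h, h'] <;> norm_num
    obtain ⟨hst, hππ⟩ := smul_eps_inj hne (h1.trans (one_smul ℝ (eps i)).symm)
    refine ⟨hππ, ?_⟩
    rcases hs i with h | h <;> rw [h] at hst ⊢ <;> linarith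
  set D : Finset (Fin n → ℝ) :=
    ((Finset.univ.filter fun i : Fin n => π i = i ∧ s i = -1).image fun i => (2:ℝ) • eps i) ∪
    ((Finset.univ.filter fun i : Fin n => i < π i ∧ s i = 1).image fun i => eps i - eps (π i)) ∪
    ((Finset.univ.filter fun i : Fin n => i < π i ∧ s i = -1).image fun i => eps i + eps (π i))
      with hD
  have hmemD : ∀ a, a ∈ D ↔
      ((∃ i, (π i = i ∧ s i = -1) ∧ (2:ℝ) • eps i = a) ∨
       (∃ i, (i < π i ∧ s i = 1) ∧ eps i - eps (π i) = a)) ∨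
      (∃ i, (i < π i ∧ s i = -1) ∧ eps i + eps (π i) = a) := by
    intro a
    rw [hD]
    simp only [Finset.mem_union, Finset.mem_image, Finset.mem_filter, Finset.mem_univ, true_and]
  have hsubD : ↑D ⊆ PosRoots n := by
    intro a haD
    rcases (hmemD a).1 haD with (⟨i, _, rfl⟩ | ⟨i, ⟨hlt, _⟩, rfl⟩) | ⟨i, ⟨hlt, _⟩, rfl⟩
    · exact Or.inr ⟨i, rfl⟩
    · exact Or.inl ⟨i, π i, hlt, Or.inl rfl⟩
    · exact Or.inl ⟨i, π i, hlt, Or.inr rfl⟩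
  -- block lemma
  have block : ∀ i p m : Fin n, (m = i ∨ m = π i) → (m = p ∨ m = π p) →
      (π i = i ∨ i < π i) → (π p = p ∨ p < π p) → i = p := by
    intro i p m h1 h2 c1 c2
    have e1 : π (π i) = i := (hinv i).1
    have e2 : π (π p) = p := (hinv p).1
    rcases h1 with rfl | rfl
    · rcases h2 with rfl | h
      · rfl
      · have hAp : π m = p := by rw [h]; exact e2
        rcases c1 with c1 | c1
        · rw [← c1, hAp]
        · rcases c2 with c2 | c2
          · exact h.trans c2
          · rw [← h] at c2
            rw [hAp] at c1
            exact absurd c2 (lt_asymm c1)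
    · rcases h2 with h | h
      · rcases c1 with c1 | c1
        · exact c1.symm.trans h
        · rcases c2 with c2 | c2
          · have e1' : π p = i := by rw [← h]; exact e1
            rw [← e1', c2]
          · have e1' : π p = i := by rw [← h]; exact e1
            rw [h] at c1
            rw [e1'] at c2
            exact absurd c2 (lt_asymm c1)
      · have := congrArg π h
        rw [e1, e2] at this
        exact this
  -- support of elements of D
  have hsuppD : ∀ a ∈ D, ∃ i : Fin n,
      ((a = (2:ℝ) • eps i ∧ π i = i ∧ s i = -1) ∨
       (a = eps i - eps (π i) ∧ i < π i ∧ s i = 1) ∨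
       (a = eps i + eps (π i) ∧ i < π i ∧ s i = -1)) ∧
      (∀ m, a m ≠ 0 → m = i ∨ m = π i) := by
    intro a haD
    rcases (hmemD a).1 haD with (⟨i, hi, rfl⟩ | ⟨i, hi, rfl⟩) | ⟨i, hi, rfl⟩
    · exact ⟨i, Or.inl ⟨rfl, hi⟩, fun m hm => Or.inl (root_supp_two hm)⟩
    · exact ⟨i, Or.inr (Or.inl ⟨rfl, hi⟩), fun m hm => root_supp_sub hi.1.ne hm⟩
    · exact ⟨i, Or.inr (Or.inr ⟨rfl, hi⟩), fun m hm => root_supp_add hm⟩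
  have hdisjD : ∀ a ∈ D, ∀ b ∈ D, a ≠ b → ∀ m, a m = 0 ∨ b m = 0 := by
    intro a haD b hbD hne m
    by_contra hc
    push_neg at hc
    obtain ⟨ham, hbm⟩ := hc
    obtain ⟨i, hi, hisupp⟩ := hsuppD a haD
    obtain ⟨p, hp, hpsupp⟩ := hsuppD b hbD
    have c1 : π i = i ∨ i < π i := by
      rcases hi with ⟨_, h, _⟩ | ⟨_, h, _⟩ | ⟨_, h, _⟩
      · exact Or.inl h
      · exact Or.inr h
      · exact Or.inr h
    have c2 : π p = p ∨ p < π p := by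
      rcases hp with ⟨_, h, _⟩ | ⟨_, h, _⟩ | ⟨_, h, _⟩
      · exact Or.inl h
      · exact Or.inr h
      · exact Or.inr h
    have hip : i = p := block i p m (hisupp m ham) (hpsupp m hbm) c1 c2
    subst hip
    rcases hi with ⟨ha1, ha2, ha3⟩ | ⟨ha1, ha2, ha3⟩ | ⟨ha1, ha2, ha3⟩ <;>
      rcases hp with ⟨hb1, hb2, hb3⟩ | ⟨hb1, hb2, hb3⟩ | ⟨hb1, hb2, hb3⟩ <;>
      first
        | (exact hne (ha1.trans hb1.symm))
        | (rw [ha2] at hb2; exact lt_irrefl _ hb2)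
        | (rw [hb2] at ha2; exact lt_irrefl _ ha2)
        | (rw [ha3] at hb3; norm_num at hb3)
        | (rw [hb3] at ha3; norm_num at ha3)
  have hlpD : D.toList.Pairwise (fun a b => ∀ m, a m = 0 ∨ b m = 0) :=
    (Finset.nodup_toList D).pairwise_of_forall_ne
      (fun a ha b hb hne => hdisjD a (Finset.mem_toList.1 ha) b (Finset.mem_toList.1 hb) hne)
  -- the product over D equals σ
  have hprod1 : (D.toList.map reflEnd).prod = σ := by
    refine Module.Basis.ext (Pi.basisFun ℝ (Fin n)) fun k => ?_
    rw [Pi.basisFun_apply]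
    show (D.toList.map reflEnd).prod (eps k) = σ (eps k)
    rw [hσ k]
    rcases lt_trichotomy k (π k) with hlt | heq | hgt
    · rcases hs k with hsk | hsk
      · have haD : eps k - eps (π k) ∈ D := (hmemD _).2 (Or.inl (Or.inr ⟨k, ⟨hlt, hsk⟩, rfl⟩))
        rw [prod_eq_refl _ hlpD _ (Finset.mem_toList.2 haD) k
          (by rw [sub_entries, if_pos rfl, if_neg hlt.ne]; norm_num)]
        rw [refl_sub hlt.ne, if_pos rfl, hsk, one_smul]
      · have haD : eps k + eps (π k) ∈ D := (hmemD _).2 (Or.inr ⟨k, ⟨hlt, hsk⟩, rfl⟩)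
        rw [prod_eq_refl _ hlpD _ (Finset.mem_toList.2 haD) k
          (by rw [add_entries, if_pos rfl, if_neg hlt.ne]; norm_num)]
        rw [refl_add hlt.ne, if_pos rfl, hsk]
        simp
    · -- k = π k
      rcases hs k with hsk | hsk
      · have hknot : ∀ c ∈ D, c k = 0 := by
          intro c hcD
          by_contra hck
          obtain ⟨p, hp, hpsupp⟩ := hsuppD c hcD
          have hkp : k = p := by
            rcases hpsupp k hck with h | h
            · exact h
            · have h2 : π k = p := by rw [h, (hinv p).1]
              rw [heq, h2]
          subst hkp
          rcases hp with ⟨_, _, h3⟩ | ⟨_, h2, _⟩ | ⟨_, h2, _⟩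
          · rw [hsk] at h3; norm_num at h3
          · rw [← heq] at h2; exact lt_irrefl _ h2
          · rw [← heq] at h2; exact lt_irrefl _ h2
        rw [prod_fix]
        · rw [← heq, hsk, one_smul]
        · intro c hc m hcm
          refine eps_apply_ne fun hmk => ?_
          rw [hmk] at hcm
          exact hcm (hknot c (Finset.mem_toList.1 hc))
      · have haD : (2:ℝ) • eps k ∈ D := (hmemD _).2 (Or.inl (Or.inl ⟨k, ⟨heq.symm, hsk⟩, rfl⟩))
        rw [prod_eq_refl _ hlpD _ (Finset.mem_toList.2 haD) k
          (by rw [two_entries, if_pos rfl]; norm_num)]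
        rw [refl_two, if_pos rfl, ← heq, hsk]
        simp
    · -- π k < k
      have hπk : π (π k) = k := (hinv k).1
      have hsπk : s (π k) = s k := (hinv k).2
      have hlt2 : π k < π (π k) := by rw [hπk]; exact hgt
      rcases hs k with hsk | hsk
      · have haD : eps (π k) - eps (π (π k)) ∈ D :=
          (hmemD _).2 (Or.inl (Or.inr ⟨π k, ⟨hlt2, hsπk.trans hsk⟩, rfl⟩))
        rw [prod_eq_refl _ hlpD _ (Finset.mem_toList.2 haD) k
          (by rw [sub_entries, if_neg (by omega : ¬ k = π k), if_pos hπk.symm]; norm_num)]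
        rw [refl_sub hlt2.ne, if_neg (by omega : ¬ k = π k), if_pos hπk.symm, hsk, one_smul]
      · have haD : eps (π k) + eps (π (π k)) ∈ D :=
          (hmemD _).2 (Or.inr ⟨π k, ⟨hlt2, hsπk.trans hsk⟩, rfl⟩)
        rw [prod_eq_refl _ hlpD _ (Finset.mem_toList.2 haD) k
          (by rw [add_entries, if_neg (by omega : ¬ k = π k), if_pos hπk.symm]; norm_num)]
        rw [refl_add hlt2.ne, if_neg (by omega : ¬ k = π k), if_pos hπk.symm, hsk]
        simp
  have hIsProd : isProdOfRefls D σ := by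
    intro l hlnd hlD
    have hperm : l.Perm D.toList :=
      List.perm_of_nodup_nodup_toFinset_eq hlnd (Finset.nodup_toList D)
        (by rw [hlD, Finset.toList_toFinset])
    have hcomm : (l.map reflEnd).Pairwise Commute := by
      rw [List.pairwise_map]
      refine hlnd.pairwise_of_forall_ne fun a ha b hb hne => ?_
      have haD : a ∈ D := by rw [← hlD]; exact List.mem_toFinset.2 ha
      have hbD : b ∈ D := by rw [← hlD]; exact List.mem_toFinset.2 hb
      exact reflEnd_comm (hdisjD a haD b hbD hne)
    rw [(hperm.map reflEnd).prod_eq' hcomm, hprod1]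
  have horthD : ∀ a ∈ D, ∀ b ∈ D, a ≠ b → a ⬝ᵥ b = 0 :=
    fun a ha b hb hne => dot_zero_of_disjoint (hdisjD a ha b hb hne)
  have hnodiffD : ∀ a ∈ D, ∀ b ∈ D, a - b ∉ PosRoots n := by
    intro a ha b hb
    rcases eq_or_ne a b with rfl | hne
    · rw [sub_self]; exact zero_not_root
    · exact sub_not_root (hsubD ha) (hsubD hb) (hdisjD a ha b hb hne)
  refine ⟨⟨D, hsubD, horthD, hIsProd⟩, D, ⟨hsubD, horthD, hnodiffD, hIsProd⟩, ?_⟩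
  rintro D' ⟨h1, h2, h3, h4⟩
  apply Finset.ext
  intro a
  have hd' : ∀ a ∈ D', ∀ b ∈ D', a ≠ b → ∀ m, a m = 0 ∨ b m = 0 :=
    fun a ha b hb hne =>
      disjoint_of_orth (h1 ha) (h1 hb) (h2 a ha b hb hne) (h3 a ha b hb) (h3 b hb a ha)
  rw [crit h1 hd' (h4 D'.toList (Finset.nodup_toList _) (Finset.toList_toFinset _)) a,
    crit hsubD hdisjD hprod1 a]
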